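/- Let G be a Banach Lie group acting smoothly on the right on a Banach manifold M via σ : M × G → M, and let γ ∈ L¹([a,b], 𝔤) have evolution η : [a,b] → G (an absolutely continuous curve with η(a) = e and η̇(t) = η(t).γ(t) for almost all t). Then for each (t₀, y₀) ∈ [a,b] × M, the curve t ↦ σ(y₀, η(t₀)⁻¹ η(t)) is a Carathéodory solution on all of [a,b] to the initial value problem ẏ(t) = γ(t)_♯(y(t)), y(t₀) = y₀, where v_♯(x) := T_e(σ(x,·))(v) is the fundamental vector field of v ∈ 𝔤. -/

import Mathlib

open MeasureTheory
open scoped Manifold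

section

/-- `g : [c,d] → X` is absolutely continuous: it is the indefinite Bochner
integral of an integrable function. -/
def BanachACOn {X : Type*} [NormedAddCommGroup X] [NormedSpace ℝ X]
    (g : ℝ → X) (c d : ℝ) : Prop :=
  ∃ γ : ℝ → X, IntegrableOn γ (Set.Icc c d) ∧
    ∀ t ∈ Set.Icc c d, g t = g c + ∫ s in c..t, γ s

/-- A curve `ζ : [a,b] → N` into a Banach manifold is absolutely continuous:
it is continuous and, locally in charts, absolutely continuous. -/
def MfdACOn {X : Type*} [NormedAddCommGroup X] [NormedSpace ℝ X]
    {N : Type*} [TopologicalSpace N] [ChartedSpace X N]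
    (ζ : ℝ → N) (a b : ℝ) : Prop :=
  ContinuousOn ζ (Set.Icc a b) ∧
  ∀ t₀ ∈ Set.Icc a b, ∃ c d : ℝ, c < d ∧ t₀ ∈ Set.Icc c d ∧
    Set.Icc c d ⊆ Set.Icc a b ∧ Set.Icc c d ∈ nhdsWithin t₀ (Set.Icc a b) ∧
    (∀ t ∈ Set.Icc c d, ζ t ∈ (extChartAt 𝓘(ℝ, X) (ζ t₀)).source) ∧
    BanachACOn (fun t => extChartAt 𝓘(ℝ, X) (ζ t₀) (ζ t)) c d

variable {E : Type*} [NormedAddCommGroup E] [NormedSpace ℝ E] [CompleteSpace E]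
  {G : Type*} [TopologicalSpace G] [ChartedSpace E G] [Group G]
  [LieGroup 𝓘(ℝ, E) (⊤ : ℕ∞) G]

/-- `η` is the (Carathéodory) evolution of the `L¹`-curve `γ` on `[a,b]`:
an absolutely continuous curve with `η a = 1` whose left logarithmic derivative
equals `γ` almost everywhere. -/
def IsL1EvolutionOn (η : ℝ → G) (γ : ℝ → E) (a b : ℝ) : Prop :=
  η a = 1 ∧ MfdACOn (X := E) η a b ∧
  ∀ᵐ t ∂volume, t ∈ Set.Icc a b →
    MDifferentiableAt 𝓘(ℝ, ℝ) 𝓘(ℝ, E) η t ∧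
    (mfderiv 𝓘(ℝ, ℝ) 𝓘(ℝ, E) η t (1 : ℝ) : E) =
      (mfderiv 𝓘(ℝ, E) 𝓘(ℝ, E) (fun h : G => η t * h) 1 (γ t) : E)

variable {F : Type*} [NormedAddCommGroup F] [NormedSpace ℝ F] [CompleteSpace F]
  {M : Type*} [TopologicalSpace M] [ChartedSpace F M]

/-- `ζ` is a Carathéodory solution on `[a,b]` of the initial value problem
`ẏ(t) = γ(t)_♯(y(t))`, `y(t₀) = y₀`, where `v_♯(x) = T_e(σ(x,·))(v)` is the
fundamental vector field of `v` for the right action `σ`. -/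
def IsFundamentalSol (σ : M → G → M) (γ : ℝ → E) (a b t₀ : ℝ) (y₀ : M)
    (ζ : ℝ → M) : Prop :=
  ζ t₀ = y₀ ∧ MfdACOn (X := F) ζ a b ∧
  ∀ᵐ t ∂volume, t ∈ Set.Icc a b →
    MDifferentiableAt 𝓘(ℝ, ℝ) 𝓘(ℝ, F) ζ t ∧
    (mfderiv 𝓘(ℝ, ℝ) 𝓘(ℝ, F) ζ t (1 : ℝ) : F) =
      (mfderiv 𝓘(ℝ, E) 𝓘(ℝ, F) (fun g : G => σ (ζ t) g) 1 (γ t) : F)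


section Helpers
open Set intervalIntegral

private lemma unif_nbhd {X : Type*} [NormedAddCommGroup X] [NormedSpace ℝ X]
    {Z : Type*} [PseudoMetricSpace Z]
    {K V : Set X} (hK : IsCompact K) (hV : IsOpen V) (hKV : K ⊆ V)
    {f : X → Z} (hf : ContinuousOn f V) {ε : ℝ} (hε : 0 < ε) :
    ∃ r > 0, ∀ k ∈ K, Metric.ball k r ⊆ V ∧
      ∀ z ∈ Metric.ball k r, dist (f z) (f k) ≤ ε := by
  -- for each k ∈ K pick r_k with ball k (2 r_k) ⊆ V and oscillation < ε/2
  have h : ∀ k ∈ K, ∃ rk > 0, Metric.ball k (2 * rk) ⊆ V ∧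
      ∀ z ∈ Metric.ball k (2 * rk), dist (f z) (f k) < ε / 2 := by
    intro k hk
    have hc : ContinuousAt f k := hf.continuousAt (hV.mem_nhds (hKV hk))
    rcases Metric.continuousAt_iff.1 hc (ε / 2) (by positivity) with ⟨δ, hδ, hδ'⟩
    rcases Metric.isOpen_iff.1 hV k (hKV hk) with ⟨δ', hd', hball⟩
    refine ⟨min δ δ' / 2, by positivity, ?_, ?_⟩
    · intro z hz
      apply hball
      simp only [Metric.mem_ball] at hz ⊢
      calc dist z k < 2 * (min δ δ' / 2) := hz
        _ ≤ δ' := by rw [mul_div_cancel₀ _ (two_ne_zero)]; exact min_le_right _ _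
    · intro z hz
      refine hδ' ?_
      simp only [Metric.mem_ball] at hz ⊢
      calc dist z k < 2 * (min δ δ' / 2) := hz
        _ ≤ δ := by rw [mul_div_cancel₀ _ (two_ne_zero)]; exact min_le_left _ _
  choose! rk hrk hball hosc using h
  obtain ⟨r, hr, hcov⟩ := lebesgue_number_lemma_of_metric hK
    (fun k : K => Metric.isOpen_ball (x := (k : X)) (ε := rk k))
    (fun x hx => Set.mem_iUnion.2 ⟨⟨x, hx⟩, Metric.mem_ball_self (hrk x hx)⟩)
  refine ⟨r, hr, fun k hk => ?_⟩
  obtain ⟨⟨k', hk'⟩, hsub⟩ := hcov k hk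
  have hkk' : dist k k' < rk k' := by simpa [Metric.mem_ball] using hsub (Metric.mem_ball_self hr)
  have hrk' := hrk k' hk'
  have hsub2 : Metric.ball k r ⊆ Metric.ball k' (2 * rk k') := by
    intro z hz
    have := hsub hz
    simp only [Metric.mem_ball] at this ⊢
    linarith
  constructor
  · exact hsub2.trans (hball k' hk')
  · intro z hz
    have h1 := hosc k' hk' z (hsub2 hz)
    have h2 := hosc k' hk' k (hsub2 (Metric.mem_ball_self hr))
    calc dist (f z) (f k) ≤ dist (f z) (f k')  + dist (f k') (f k) := dist_triangle _ _ _
      _ ≤ ε / 2 + ε / 2 := by rw [dist_comm (f k')]; linarith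
      _ = ε := by ring

private lemma comp_AC {X Y : Type*} [NormedAddCommGroup X] [NormedSpace ℝ X] [CompleteSpace X]
    [NormedAddCommGroup Y] [NormedSpace ℝ Y] [CompleteSpace Y]
    (Φ : X → Y) (Φ' : X → X →L[ℝ] Y) {V : Set X} (hV : IsOpen V)
    (hd : ∀ z ∈ V, HasFDerivAt Φ (Φ' z) z) (hΦ'c : ContinuousOn Φ' V)
    {c d : ℝ} (hcd : c ≤ d) {g : ℝ → X} (hg : IntegrableOn g (Set.Icc c d))
    {u : ℝ → X} (hu : ∀ t ∈ Set.Icc c d, u t = u c + ∫ s in c..t, g s)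
    (himg : ∀ t ∈ Set.Icc c d, u t ∈ V) :
    IntegrableOn (fun s => Φ' (u s) (g s)) (Set.Icc c d) ∧
    ∀ t ∈ Set.Icc c d, Φ (u t) = Φ (u c) + ∫ s in c..t, Φ' (u s) (g s) := by
  have hgn : IntegrableOn (fun s => ‖g s‖) (Set.Icc c d) := hg.norm
  have hii : ∀ x ∈ Set.Icc c d, ∀ y ∈ Set.Icc c d, IntervalIntegrable g volume x y :=
    fun x hx y hy => (hg.mono_set (uIcc_subset_Icc hx hy)).intervalIntegrable
  have hiign : ∀ x ∈ Set.Icc c d, ∀ y ∈ Set.Icc c d,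
      IntervalIntegrable (fun s => ‖g s‖) volume x y :=
    fun x hx y hy => (hgn.mono_set (uIcc_subset_Icc hx hy)).intervalIntegrable
  -- continuity of u
  have hucont : ContinuousOn u (Set.Icc c d) := by
    apply ContinuousOn.congr (f := fun t => u c + ∫ s in c..t, g s)
    · exact continuousOn_const.add <| by
        rw [← uIcc_of_le hcd]
        exact continuousOn_primitive_interval (by rwa [uIcc_of_le hcd])
    · exact hu
  have hKc : IsCompact (u '' Set.Icc c d) := isCompact_Icc.image_of_continuousOn hucont
  have hKV : u '' Set.Icc c d ⊆ V := by rintro _ ⟨t, ht, rfl⟩; exact himg t ht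
  -- continuity of t ↦ Φ' (u t)
  have hAc : ContinuousOn (fun t => Φ' (u t)) (Set.Icc c d) :=
    hΦ'c.comp hucont (fun t ht => himg t ht)
  -- integrability of h
  obtain ⟨Mb, hMb⟩ := IsCompact.exists_bound_of_continuousOn isCompact_Icc hAc
  have hh : IntegrableOn (fun s => Φ' (u s) (g s)) (Set.Icc c d) := by
    have hmeas : AEStronglyMeasurable (fun s => Φ' (u s) (g s))
        (volume.restrict (Set.Icc c d)) := by
      have h1 : AEStronglyMeasurable (fun s => ((fun t => Φ' (u t)) s, g s))
          (volume.restrict (Set.Icc c d)) :=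
        (hAc.aestronglyMeasurable_of_isCompact isCompact_Icc
          measurableSet_Icc).prodMk hg.aestronglyMeasurable
      exact (isBoundedBilinearMap_apply (𝕜 := ℝ) (E := X)
        (F := Y)).continuous.comp_aestronglyMeasurable h1
    refine ((hgn.const_mul Mb).mono' hmeas ?_)
    refine (ae_restrict_iff' measurableSet_Icc).2 (ae_of_all _ fun s hs => ?_)
    calc ‖Φ' (u s) (g s)‖ ≤ ‖Φ' (u s)‖ * ‖g s‖ := (Φ' (u s)).le_opNorm _
      _ ≤ Mb * ‖g s‖ := mul_le_mul_of_nonneg_right (hMb s hs) (norm_nonneg _)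
  refine ⟨hh, ?_⟩
  set h : ℝ → Y := fun s => Φ' (u s) (g s) with hh_def
  have hiih : ∀ x ∈ Set.Icc c d, ∀ y ∈ Set.Icc c d, IntervalIntegrable h volume x y :=
    fun x hx y hy => (hh.mono_set (uIcc_subset_Icc hx hy)).intervalIntegrable
  have hprim : ContinuousOn (fun t => ∫ s in c..t, h s) (Set.Icc c d) := by
    rw [← uIcc_of_le hcd]
    exact continuousOn_primitive_interval (by rwa [uIcc_of_le hcd])
  have hprimn : ContinuousOn (fun t => ∫ s in c..t, ‖g s‖) (Set.Icc c d) := by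
    rw [← uIcc_of_le hcd]
    exact continuousOn_primitive_interval (by rwa [uIcc_of_le hcd])
  have hΦcont : ContinuousOn Φ V := fun z hz => (hd z hz).continuousAt.continuousWithinAt
  -- key estimate
  have key : ∀ ε > (0:ℝ), ∀ t ∈ Set.Icc c d,
      ‖Φ (u t) - Φ (u c) - ∫ s in c..t, h s‖ ≤ 2 * ε * ∫ s in c..t, ‖g s‖ := by
    intro ε hε
    obtain ⟨r, hr, hball⟩ := unif_nbhd hKc hV hKV hΦ'c hε
    obtain ⟨τ, hτ, hτ'⟩ := Metric.uniformContinuousOn_iff.1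
      (isCompact_Icc.uniformContinuousOn_of_continuous hucont) r hr
    set S : Set ℝ := {t | t ∈ Set.Icc c d ∧
      ‖Φ (u t) - Φ (u c) - ∫ s in c..t, h s‖ ≤ 2 * ε * ∫ s in c..t, ‖g s‖} with hS_def
    have hScl : IsClosed (S ∩ Set.Icc c d) := by
      have hEq : S ∩ Set.Icc c d = Set.Icc c d ∩
          (fun t => ‖Φ (u t) - Φ (u c) - ∫ s in c..t, h s‖ - 2 * ε * ∫ s in c..t, ‖g s‖) ⁻¹'
            Set.Iic 0 := by
        ext t
        simp only [hS_def, Set.mem_inter_iff, Set.mem_setOf_eq, Set.mem_preimage,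
          Set.mem_Iic, sub_nonpos]
        tauto
      rw [hEq]
      refine ContinuousOn.preimage_isClosed_of_isClosed ?_ isClosed_Icc isClosed_Iic
      refine ContinuousOn.sub (ContinuousOn.norm ?_) (continuousOn_const.mul hprimn)
      exact ((hΦcont.comp hucont (fun t ht => himg t ht)).sub continuousOn_const).sub hprim
    have hmem : Set.Icc c d ⊆ S := by
      apply hScl.Icc_subset_of_forall_exists_gt
      · refine ⟨⟨le_refl c, hcd⟩, ?_⟩
        simp [intervalIntegral.integral_same]
      · rintro x ⟨⟨hxIcc, hw⟩, hxIco⟩ y hy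
        set z := min (min (x + τ/2) y) d with hz_def
        have hxd : x < d := hxIco.2
        have hzx : x < z := lt_min (lt_min (by linarith) hy) hxd
        have hzy : z ≤ y := (min_le_left _ _).trans (min_le_right _ _)
        have hzIcc : z ∈ Set.Icc c d := ⟨hxIcc.1.trans hzx.le, min_le_right _ _⟩
        have hzτ : z - x ≤ τ/2 := by
          have : z ≤ x + τ/2 := (min_le_left _ _).trans (min_le_left _ _)
          linarith
        refine ⟨z, ⟨⟨hzIcc, ?_⟩, hzx, hzy⟩⟩
        -- every point of [x,z] maps into ball (u x) r
        have hsIcc : ∀ s ∈ Set.Icc x z, s ∈ Set.Icc c d :=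
          fun s hs => ⟨hxIcc.1.trans hs.1, hs.2.trans hzIcc.2⟩
        have hss : ∀ s ∈ Set.Icc x z, u s ∈ Metric.ball (u x) r := by
          intro s hs
          have : dist s x < τ := by
            rw [Real.dist_eq, abs_of_nonneg (by linarith [hs.1])]
            have := hs.2
            simp only [hz_def] at this ⊢
            linarith
          exact hτ' s (hsIcc s hs) x hxIcc this
        obtain ⟨hbV, hosc⟩ := hball (u x) ⟨x, hxIcc, rfl⟩
        -- mean value inequality
        have mvi : ‖Φ (u z) - Φ (u x) - Φ' (u x) (u z - u x)‖ ≤ ε * ‖u z - u x‖ := by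
          refine Convex.norm_image_sub_le_of_norm_hasFDerivWithin_le'
            (fun p hp => (hd p (hbV hp)).hasFDerivWithinAt)
            (fun p hp => by rw [← dist_eq_norm]; exact hosc p hp)
            (convex_ball _ _) (Metric.mem_ball_self hr) (hss z ⟨hzx.le, le_refl z⟩)
        -- u z - u x is the integral of g
        have hdiff : u z - u x = ∫ s in x..z, g s := by
          rw [hu z hzIcc, hu x hxIcc]
          rw [add_sub_add_left_eq_sub]
          exact integral_interval_sub_left (hii c ⟨le_refl c, hcd⟩ z hzIcc)
            (hii c ⟨le_refl c, hcd⟩ x hxIcc)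
        have εnorm : ‖u z - u x‖ ≤ ∫ s in x..z, ‖g s‖ := by
          rw [hdiff]
          exact intervalIntegral.norm_integral_le_integral_norm hzx.le
        have hgnint : (0:ℝ) ≤ ∫ s in x..z, ‖g s‖ :=
          intervalIntegral.integral_nonneg hzx.le (fun s _ => norm_nonneg _)
        have hlin : Φ' (u x) (u z - u x) = ∫ s in x..z, Φ' (u x) (g s) := by
          rw [hdiff]
          exact ((Φ' (u x)).intervalIntegral_comp_comm (hii x hxIcc z hzIcc)).symm
        have h1int : IntervalIntegrable (fun s => Φ' (u x) (g s)) volume x z :=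
          ⟨(Φ' (u x)).integrable_comp (hii x hxIcc z hzIcc).1,
           (Φ' (u x)).integrable_comp (hii x hxIcc z hzIcc).2⟩
        have hptwise : ∀ᵐ s ∂volume.restrict (Set.uIoc x z),
            ‖Φ' (u x) (g s) - h s‖ ≤ ε * ‖g s‖ := by
          refine (ae_restrict_iff' measurableSet_uIoc).2 (ae_of_all _ fun s hs => ?_)
          have hs' : s ∈ Set.Icc x z := by
            rw [uIoc_of_le hzx.le] at hs
            exact ⟨hs.1.le, hs.2⟩
          have hb : ‖Φ' (u x) - Φ' (u s)‖ ≤ ε := by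
            rw [← dist_eq_norm, dist_comm]
            exact hosc (u s) (hss s hs')
          calc ‖Φ' (u x) (g s) - h s‖ = ‖(Φ' (u x) - Φ' (u s)) (g s)‖ := by
                simp [hh_def, ContinuousLinearMap.sub_apply]
            _ ≤ ‖Φ' (u x) - Φ' (u s)‖ * ‖g s‖ := (Φ' (u x) - Φ' (u s)).le_opNorm _
            _ ≤ ε * ‖g s‖ := mul_le_mul_of_nonneg_right hb (norm_nonneg _)
        have herr : ‖∫ s in x..z, (Φ' (u x) (g s) - h s)‖ ≤ ∫ s in x..z, ε * ‖g s‖ :=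
          (intervalIntegral.norm_integral_le_abs_of_norm_le hptwise
            ((hiign x hxIcc z hzIcc).const_mul ε)).trans_eq
            (abs_of_nonneg (intervalIntegral.integral_nonneg hzx.le
              (fun s _ => by positivity)))
        have herr' : ‖∫ s in x..z, (Φ' (u x) (g s) - h s)‖ ≤ ε * ∫ s in x..z, ‖g s‖ :=
          herr.trans_eq (intervalIntegral.integral_const_mul ε _)
        -- combine
        have hmid : ‖Φ (u z) - Φ (u x) - ∫ s in x..z, h s‖ ≤ 2 * ε * ∫ s in x..z, ‖g s‖ := by
          have hsplit : Φ (u z) - Φ (u x) - ∫ s in x..z, h s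
              = (Φ (u z) - Φ (u x) - Φ' (u x) (u z - u x))
                + ∫ s in x..z, (Φ' (u x) (g s) - h s) := by
            rw [intervalIntegral.integral_sub h1int (hiih x hxIcc z hzIcc), hlin]
            abel
          rw [hsplit]
          calc ‖_ + _‖ ≤ ‖Φ (u z) - Φ (u x) - Φ' (u x) (u z - u x)‖
                + ‖∫ s in x..z, (Φ' (u x) (g s) - h s)‖ := norm_add_le _ _
            _ ≤ ε * ‖u z - u x‖ + ε * ∫ s in x..z, ‖g s‖ := add_le_add mvi herr'
            _ ≤ 2 * ε * ∫ s in x..z, ‖g s‖ := by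
                nlinarith [mul_le_mul_of_nonneg_left εnorm hε.le]
        have hadjh : (∫ s in c..x, h s) + ∫ s in x..z, h s = ∫ s in c..z, h s :=
          integral_add_adjacent_intervals (hiih c ⟨le_refl c, hcd⟩ x hxIcc)
            (hiih x hxIcc z hzIcc)
        have hadjg : (∫ s in c..x, ‖g s‖) + ∫ s in x..z, ‖g s‖ = ∫ s in c..z, ‖g s‖ :=
          integral_add_adjacent_intervals (hiign c ⟨le_refl c, hcd⟩ x hxIcc)
            (hiign x hxIcc z hzIcc)
        calc ‖Φ (u z) - Φ (u c) - ∫ s in c..z, h s‖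
            = ‖(Φ (u x) - Φ (u c) - ∫ s in c..x, h s)
                + (Φ (u z) - Φ (u x) - ∫ s in x..z, h s)‖ := by
              rw [← hadjh]; congr 1; abel
          _ ≤ ‖Φ (u x) - Φ (u c) - ∫ s in c..x, h s‖
                + ‖Φ (u z) - Φ (u x) - ∫ s in x..z, h s‖ := norm_add_le _ _
          _ ≤ (2 * ε * ∫ s in c..x, ‖g s‖) + 2 * ε * ∫ s in x..z, ‖g s‖ := add_le_add hw hmid
          _ = 2 * ε * ∫ s in c..z, ‖g s‖ := by rw [← hadjg]; ring
    exact fun t ht => (hmem ht).2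
  -- let ε → 0
  intro t ht
  have hI : (0:ℝ) ≤ ∫ s in c..t, ‖g s‖ :=
    intervalIntegral.integral_nonneg ht.1 (fun s _ => norm_nonneg _)
  have hzero : ‖Φ (u t) - Φ (u c) - ∫ s in c..t, h s‖ ≤ 0 := by
    by_contra hcon
    push_neg at hcon
    set N := ‖Φ (u t) - Φ (u c) - ∫ s in c..t, h s‖ with hN
    set I := ∫ s in c..t, ‖g s‖ with hI_def
    have hK := key (N / (2 * (I + 1))) (by positivity) t ht
    rw [← hN, ← hI_def] at hK
    have hpos : (0:ℝ) < 2 * (I + 1) := by positivity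
    have hval : N / (2 * (I + 1)) * (2 * (I + 1)) = N := div_mul_cancel₀ _ (ne_of_gt hpos)
    have hε₀ : 0 < N / (2 * (I + 1)) := div_pos hcon hpos
    nlinarith [hK, hval, hε₀, hI]
  have h0 : Φ (u t) - Φ (u c) - ∫ s in c..t, h s = 0 := norm_le_zero_iff.1 hzero
  have h1 : Φ (u t) - Φ (u c) = ∫ s in c..t, h s := sub_eq_zero.1 h0
  rw [sub_eq_iff_eq_add.1 h1, add_comm]

end Helpers

/-- Solutions of the fundamental vector field ODE via the evolution: if `γ` is
`L¹` with evolution `η`, then for every `(t₀, y₀)` the curve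
`t ↦ σ (y₀, η(t₀)⁻¹ η(t))` is a Carathéodory solution on all of `[a,b]` of the
initial value problem `ẏ(t) = γ(t)_♯(y(t))`, `y(t₀) = y₀`. -/
theorem isFundamentalSol_action_evolution
    (σ : M → G → M)
    (hσ : ContMDiff (𝓘(ℝ, F).prod 𝓘(ℝ, E)) 𝓘(ℝ, F) (⊤ : ℕ∞)
      (fun p : M × G => σ p.1 p.2))
    (hone : ∀ x : M, σ x 1 = x)
    (hmul : ∀ (x : M) (g h : G), σ x (g * h) = σ (σ x g) h)
    (a b : ℝ) (hab : a < b) (γ : ℝ → E)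
    (hγ : IntegrableOn γ (Set.Icc a b))
    (η : ℝ → G) (hη : IsL1EvolutionOn η γ a b)
    (t₀ : ℝ) (ht₀ : t₀ ∈ Set.Icc a b) (y₀ : M) :
    IsFundamentalSol (F := F) σ γ a b t₀ y₀ (fun t => σ y₀ ((η t₀)⁻¹ * η t)) := by
  obtain ⟨hηa, ⟨hηcont, hηAC⟩, hηderiv⟩ := hη
  set Ψ : G → M := fun g => σ y₀ ((η t₀)⁻¹ * g) with hΨ_def
  have hΨs : ContMDiff 𝓘(ℝ, E) 𝓘(ℝ, F) (⊤ : ℕ∞) Ψ := by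
    have h1 : ContMDiff 𝓘(ℝ, E) 𝓘(ℝ, E) (⊤ : ℕ∞) (fun g : G => (η t₀)⁻¹ * g) :=
      contMDiff_mul_left
    exact hσ.comp (contMDiff_const.prodMk h1)
  refine ⟨?_, ⟨?_, ?_⟩, ?_⟩
  · show σ y₀ ((η t₀)⁻¹ * η t₀) = y₀
    rw [inv_mul_cancel]
    exact hone y₀
  · exact hΨs.continuous.comp_continuousOn hηcont
  · -- local absolute continuity
    intro t₁ ht₁
    obtain ⟨c, d, hcd, ht₁cd, hsubab, hnhd, hsrc, g, hgint, hgac⟩ := hηAC t₁ ht₁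
    set u : ℝ → E := fun t => extChartAt 𝓘(ℝ, E) (η t₁) (η t) with hu_def
    set W : Set G := (extChartAt 𝓘(ℝ, E) (η t₁)).source ∩
      Ψ ⁻¹' (extChartAt 𝓘(ℝ, F) (Ψ (η t₁))).source with hW_def
    have hWopen : IsOpen W :=
      (isOpen_extChartAt_source _).inter
        (hΨs.continuous.isOpen_preimage _ (isOpen_extChartAt_source _))
    have hηt₁W : η t₁ ∈ W :=
      ⟨mem_extChartAt_source _, mem_extChartAt_source _⟩
    -- the map written in the fixed charts, and its local smoothness
    set Φ : E → F := (extChartAt 𝓘(ℝ, F) (Ψ (η t₁))) ∘ Ψ ∘ (extChartAt 𝓘(ℝ, E) (η t₁)).symm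
      with hΦ_def
    have hΨat : ContMDiffAt 𝓘(ℝ, E) 𝓘(ℝ, F) (⊤ : ℕ∞) Ψ (η t₁) := hΨs.contMDiffAt
    have hΦat := (contMDiffAt_iff.1 hΨat).2
    rw [show Set.range 𝓘(ℝ, E) = Set.univ from ModelWithCorners.range_eq_univ _,
      contDiffWithinAt_univ] at hΦat
    obtain ⟨V₀, hV₀nhds, hΦC1⟩ := hΦat.contDiffOn (m := 1)
      (by exact_mod_cast le_top) (by simp)
    set V : Set E := interior V₀ ∩ ((extChartAt 𝓘(ℝ, E) (η t₁)).target ∩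
      (extChartAt 𝓘(ℝ, E) (η t₁)).symm ⁻¹' W) with hV_def
    have hVopen : IsOpen V :=
      isOpen_interior.inter
        ((continuousOn_extChartAt_symm _).isOpen_inter_preimage
          (isOpen_extChartAt_target _) hWopen)
    have hΦdiff : ContDiffOn ℝ 1 Φ V :=
      (hΦC1.mono interior_subset).mono (fun z hz => hz.1)
    have hd' : ∀ z ∈ V, HasFDerivAt Φ (fderiv ℝ Φ z) z := fun z hz =>
      ((hΦdiff.contDiffAt (hVopen.mem_nhds hz)).differentiableAt one_ne_zero).hasFDerivAt
    have hΦ'c : ContinuousOn (fderiv ℝ Φ) V :=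
      hΦdiff.continuousOn_fderiv_of_isOpen hVopen le_rfl
    -- shrink the interval
    have hpre : η ⁻¹' W ∈ nhdsWithin t₁ (Set.Icc a b) :=
      (hηcont t₁ ht₁).preimage_mem_nhdsWithin (hWopen.mem_nhds hηt₁W)
    have hucontw : ContinuousWithinAt u (Set.Icc a b) t₁ :=
      (continuousAt_extChartAt (η t₁)).comp_continuousWithinAt (hηcont t₁ ht₁)
    have hpre2 : u ⁻¹' interior V₀ ∈ nhdsWithin t₁ (Set.Icc a b) :=
      hucontw.preimage_mem_nhdsWithin (interior_mem_nhds.2 hV₀nhds)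
    obtain ⟨δ, hδ, hδsub⟩ := Metric.mem_nhdsWithin_iff.1
      (Filter.inter_mem (Filter.inter_mem hnhd hpre) hpre2)
    set c' : ℝ := max a (t₁ - δ/2) with hc'_def
    set d' : ℝ := min b (t₁ + δ/2) with hd'_def
    have hc'd' : c' < d' := by
      rcases ht₁ with ⟨h1, h2⟩
      apply max_lt <;> apply lt_min <;> linarith
    have ht₁' : t₁ ∈ Set.Icc c' d' :=
      ⟨max_le ht₁.1 (by linarith), le_min ht₁.2 (by linarith)⟩
    have hsub' : Set.Icc c' d' ⊆ Set.Icc a b :=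
      fun s hs => ⟨(le_max_left _ _).trans hs.1, hs.2.trans (min_le_left _ _)⟩
    have hsub2 : Set.Icc c' d' ⊆ (Set.Icc c d ∩ η ⁻¹' W) ∩ u ⁻¹' interior V₀ := by
      intro s hs
      apply hδsub
      constructor
      · rw [Metric.mem_ball, Real.dist_eq]
        have h1 : t₁ - δ/2 ≤ s := (le_max_right _ _).trans hs.1
        have h2 : s ≤ t₁ + δ/2 := hs.2.trans (min_le_right _ _)
        rw [abs_sub_lt_iff]
        constructor <;> linarith
      · exact hsub' hs
    have hnhd' : Set.Icc c' d' ∈ nhdsWithin t₁ (Set.Icc a b) := by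
      rw [Metric.mem_nhdsWithin_iff]
      refine ⟨δ/2, by linarith, ?_⟩
      rintro s ⟨hs1, hs2⟩
      rw [Metric.mem_ball, Real.dist_eq, abs_sub_lt_iff] at hs1
      exact ⟨max_le hs2.1 (by linarith), le_min hs2.2 (by linarith)⟩
    have himg : ∀ t ∈ Set.Icc c' d', u t ∈ V := by
      intro t ht
      have htW : η t ∈ W := ((hsub2 ht).1).2
      refine ⟨(hsub2 ht).2, (extChartAt 𝓘(ℝ, E) (η t₁)).map_source htW.1, ?_⟩
      show (extChartAt 𝓘(ℝ, E) (η t₁)).symm (u t) ∈ W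
      rw [hu_def]
      rw [(extChartAt 𝓘(ℝ, E) (η t₁)).left_inv htW.1]
      exact htW
    have hii : ∀ x ∈ Set.Icc c d, ∀ y ∈ Set.Icc c d, IntervalIntegrable g volume x y :=
      fun x hx y hy => (hgint.mono_set (Set.uIcc_subset_Icc hx hy)).intervalIntegrable
    have hu' : ∀ t ∈ Set.Icc c' d', u t = u c' + ∫ s in c'..t, g s := by
      intro t ht
      have htcd : t ∈ Set.Icc c d := ((hsub2 ht).1).1
      have hc'cd : c' ∈ Set.Icc c d := ((hsub2 (Set.left_mem_Icc.2 hc'd'.le)).1).1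
      rw [hgac t htcd, hgac c' hc'cd]
      rw [add_assoc]
      congr 1
      rw [← intervalIntegral.integral_interval_sub_left (hii c ⟨le_refl c, hcd.le⟩ t htcd)
        (hii c ⟨le_refl c, hcd.le⟩ c' hc'cd)]
      abel
    have hgint' : IntegrableOn g (Set.Icc c' d') :=
      hgint.mono_set (fun s hs => ((hsub2 hs).1).1)
    obtain ⟨hint, heqn⟩ := comp_AC Φ (fderiv ℝ Φ) hVopen hd' hΦ'c hc'd'.le hgint' hu' himg
    have hΦu : ∀ t ∈ Set.Icc c' d', Φ (u t) = extChartAt 𝓘(ℝ, F) (Ψ (η t₁)) (Ψ (η t)) := by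
      intro t ht
      have htW : η t ∈ W := ((hsub2 ht).1).2
      show extChartAt 𝓘(ℝ, F) (Ψ (η t₁)) (Ψ ((extChartAt 𝓘(ℝ, E) (η t₁)).symm (u t)))
        = extChartAt 𝓘(ℝ, F) (Ψ (η t₁)) (Ψ (η t))
      rw [hu_def, (extChartAt 𝓘(ℝ, E) (η t₁)).left_inv htW.1]
    refine ⟨c', d', hc'd', ht₁', hsub', hnhd', ?_, ?_⟩
    · intro t ht
      exact (((hsub2 ht).1).2).2
    · refine ⟨fun s => fderiv ℝ Φ (u s) (g s), hint, fun t ht => ?_⟩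
      have h1 := heqn t ht
      rw [hΦu t ht, hΦu c' (Set.left_mem_Icc.2 hc'd'.le)] at h1
      exact h1
  · -- a.e. derivative identity
    filter_upwards [hηderiv] with t hder ht
    obtain ⟨hmd, heq⟩ := hder ht
    have hΨd : MDifferentiableAt 𝓘(ℝ, E) 𝓘(ℝ, F) Ψ (η t) :=
      hΨs.mdifferentiableAt (by simp)
    constructor
    · show MDifferentiableAt 𝓘(ℝ, ℝ) 𝓘(ℝ, F) (Ψ ∘ η) t
      exact MDifferentiableAt.comp t hΨd hmd
    · have hc1 : mfderiv 𝓘(ℝ, ℝ) 𝓘(ℝ, F) (Ψ ∘ η) t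
          = (mfderiv 𝓘(ℝ, E) 𝓘(ℝ, F) Ψ (η t)).comp (mfderiv 𝓘(ℝ, ℝ) 𝓘(ℝ, E) η t) :=
        mfderiv_comp t hΨd hmd
      have hLmul : (fun g : G => σ (σ y₀ ((η t₀)⁻¹ * η t)) g) = Ψ ∘ (fun g : G => η t * g) := by
        funext g
        show σ (σ y₀ ((η t₀)⁻¹ * η t)) g = σ y₀ ((η t₀)⁻¹ * (η t * g))
        rw [← mul_assoc, hmul y₀ ((η t₀)⁻¹ * η t) g]
      have hmuld : MDifferentiableAt 𝓘(ℝ, E) 𝓘(ℝ, E) (fun g : G => η t * g) 1 :=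
        mdifferentiableAt_mul_left
      have hc2 : mfderiv 𝓘(ℝ, E) 𝓘(ℝ, F) (fun g : G => σ (σ y₀ ((η t₀)⁻¹ * η t)) g) 1
          = (mfderiv 𝓘(ℝ, E) 𝓘(ℝ, F) Ψ (η t)).comp
            (mfderiv 𝓘(ℝ, E) 𝓘(ℝ, E) (fun g : G => η t * g) 1) := by
        rw [hLmul, mfderiv_comp_of_eq hΨd hmuld (mul_one _)]
        rw [mul_one]
      show (mfderiv 𝓘(ℝ, ℝ) 𝓘(ℝ, F) (Ψ ∘ η) t (1 : ℝ) : F) = _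
      rw [hc1, hc2]
      simp only [ContinuousLinearMap.coe_comp', Function.comp_apply]
      exact congrArg (fun v => mfderiv 𝓘(ℝ, E) 𝓘(ℝ, F) Ψ (η t) v) heq

end
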